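/- Behavior of the exponential-utility premium in the risk aversion parameter: assume additionally 0 < q_t < 1 for t = 0,...,T−1, let Z ∈ L^∞ have the representation Z = ∑_{t=1}^T z_t 1_{(t−1 < τ ≤ t)} + z_{T+1} 1_{(T < τ)}, write H_α(Z) for the indifference price under exponential utility with parameter α ∈ (0,∞)^T, and set H_∞(Z) := max{z_1,...,z_{T+1}}. Then: (a) E[Z] ≤ H_α(Z) ≤ H_∞(Z) for all α ∈ (0,∞)^T; (b) H_α(Z) → E[Z] as α_t → 0+ for every t ∈ 𝕋; (c) H_α(Z) → H_∞(Z) as α_t → ∞ for every t ∈ 𝕋. -/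

import Mathlib

open MeasureTheory Finset Real

noncomputable section

/-- `A(W)`: the set of admissible intertemporal allocations of the risk `W`:
adapted processes `(Y_t)_{t∈𝕋}` with each `Y_t` essentially bounded and
`∑_{t∈𝕋} Y_t/B_t = W` a.s. -/
def IsAlloc {Ω : Type*} [mΩ : MeasurableSpace Ω] (μ : Measure Ω) (T : ℕ)
    (ℱ : ℕ → MeasurableSpace Ω) (B : ℕ → Ω → ℝ) (W : Ω → ℝ) (Y : ℕ → Ω → ℝ) : Prop :=
  (∀ t ∈ Finset.Icc 1 T, Measurable[ℱ t] (Y t) ∧ ∃ C : ℝ, ∀ᵐ ω ∂μ, |Y t ω| ≤ C) ∧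
  ∀ᵐ ω ∂μ, ∑ t ∈ Finset.Icc 1 T, Y t ω / B t ω = W ω

/-- The integrated expected utility `∑_{t∈𝕋} E[u_t(Ỹ_t)]` of an allocation. -/
def allocVal {Ω : Type*} [mΩ : MeasurableSpace Ω] (μ : Measure Ω) (T : ℕ)
    (u : ℕ → ℝ → ℝ) (B : ℕ → Ω → ℝ) (Y : ℕ → Ω → ℝ) : ℝ :=
  ∑ t ∈ Finset.Icc 1 T, ∫ ω, u t (Y t ω / B t ω) ∂μ

/-- The utility functional `U(W) = sup { ∑_t E[u_t(Ỹ_t)] : Y ∈ A(W) }`. -/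
def Util {Ω : Type*} [mΩ : MeasurableSpace Ω] (μ : Measure Ω) (T : ℕ)
    (ℱ : ℕ → MeasurableSpace Ω) (u : ℕ → ℝ → ℝ) (B : ℕ → Ω → ℝ) (W : Ω → ℝ) : ℝ :=
  sSup {s : ℝ | ∃ Y, IsAlloc μ T ℱ B W Y ∧ s = allocVal μ T u B Y}


section ExpPremiumHelpers

/-! ### Elementary helpers for the exponential utility -/

/-- deterministic optimal value of exponential utilities with aggregate `1/β = S`. -/
def Vfun (S s : ℝ) : ℝ := S * (1 - Real.exp (-(s / S)))

lemma Vfun_le_iff {S s₁ s₂ : ℝ} (hS : 0 < S) : Vfun S s₁ ≤ Vfun S s₂ ↔ s₁ ≤ s₂ := by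
  unfold Vfun
  rw [mul_le_mul_iff_right₀ hS, sub_le_sub_iff_left, Real.exp_le_exp, neg_le_neg_iff,
    div_le_div_iff_of_pos_right hS]

lemma Vfun_le_self {S : ℝ} (hS : 0 < S) (s : ℝ) : Vfun S s ≤ s := by
  have h := Real.add_one_le_exp (-(s / S))
  unfold Vfun
  have : 1 - Real.exp (-(s / S)) ≤ s / S := by linarith
  calc S * (1 - Real.exp (-(s / S))) ≤ S * (s / S) := mul_le_mul_of_nonneg_left this hS.le
    _ = s := by field_simp

/-- tangent-line bound for the concave exponential utility. -/
lemma expu_tangent {a : ℝ} (ha : 0 < a) (x y : ℝ) :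
    (1 / a) * (1 - Real.exp (-a * x)) ≤
      (1 / a) * (1 - Real.exp (-a * y)) + Real.exp (-a * y) * (x - y) := by
  have h2 : Real.exp (-a * x) = Real.exp (-a * y) * Real.exp (-(a * (x - y))) := by
    rw [← Real.exp_add]; ring_nf
  have h := Real.add_one_le_exp (-(a * (x - y)))
  have hy := Real.exp_pos (-a * y)
  rw [h2]
  have h3 : Real.exp (-a * y) * (-(a * (x - y)) + 1) ≤
      Real.exp (-a * y) * Real.exp (-(a * (x - y))) := mul_le_mul_of_nonneg_left h hy.le
  rw [div_mul_eq_mul_div, div_mul_eq_mul_div, div_add' _ _ _ (ne_of_gt ha),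
    div_le_div_iff_of_pos_right ha]
  nlinarith

lemma expu_le_inv {a : ℝ} (ha : 0 < a) (x : ℝ) :
    (1 / a) * (1 - Real.exp (-a * x)) ≤ 1 / a := by
  have := Real.exp_pos (-a * x)
  have h1 : (0:ℝ) < 1 / a := by positivity
  nlinarith

lemma expu_mono {a : ℝ} (ha : 0 < a) {x y : ℝ} (h : x ≤ y) :
    (1 / a) * (1 - Real.exp (-a * x)) ≤ (1 / a) * (1 - Real.exp (-a * y)) := by
  have h1 : (0:ℝ) < 1 / a := by positivity
  have : Real.exp (-a * y) ≤ Real.exp (-a * x) := by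
    apply Real.exp_le_exp.mpr; nlinarith
  nlinarith

/-- value of the balanced deterministic allocation. -/
lemma sum_u_eq {I : Finset ℕ} (hI : I.Nonempty) {a : ℕ → ℝ} (ha : ∀ t ∈ I, 0 < a t) (s : ℝ) :
    ∑ t ∈ I, (1 / a t) * (1 - Real.exp (-(a t) * (s / ((∑ k ∈ I, 1 / a k) * a t)))) =
      Vfun (∑ k ∈ I, 1 / a k) s := by
  set S := ∑ k ∈ I, 1 / a k with hS
  have hSpos : 0 < S := Finset.sum_pos (fun t ht => by have := ha t ht; positivity) hI
  have : ∀ t ∈ I, (1 / a t) * (1 - Real.exp (-(a t) * (s / (S * a t)))) =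
      (1 / a t) * (1 - Real.exp (-(s / S))) := by
    intro t ht
    have hat := ha t ht
    congr 2
    field_simp
  rw [Finset.sum_congr rfl this, ← Finset.sum_mul]
  unfold Vfun; rw [← hS]

/-- deterministic upper bound: no allocation beats the balanced one. -/
lemma sum_u_le {I : Finset ℕ} (hI : I.Nonempty) {a : ℕ → ℝ} (ha : ∀ t ∈ I, 0 < a t) (m : ℕ → ℝ) :
    ∑ t ∈ I, (1 / a t) * (1 - Real.exp (-(a t) * m t)) ≤
      Vfun (∑ k ∈ I, 1 / a k) (∑ t ∈ I, m t) := by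
  set S := ∑ k ∈ I, 1 / a k with hS
  set σ := ∑ t ∈ I, m t with hσ
  have hSpos : 0 < S := Finset.sum_pos (fun t ht => by have := ha t ht; positivity) hI
  have key : ∀ t ∈ I, (1 / a t) * (1 - Real.exp (-(a t) * m t)) ≤
      (1 / a t) * (1 - Real.exp (-(σ / S))) + Real.exp (-(σ / S)) * (m t - σ / (S * a t)) := by
    intro t ht
    have hat := ha t ht
    have := expu_tangent hat (m t) (σ / (S * a t))
    have he : -(a t) * (σ / (S * a t)) = -(σ / S) := by field_simp
    rwa [he] at this
  calc ∑ t ∈ I, (1 / a t) * (1 - Real.exp (-(a t) * m t))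
      ≤ ∑ t ∈ I, ((1 / a t) * (1 - Real.exp (-(σ / S))) +
          Real.exp (-(σ / S)) * (m t - σ / (S * a t))) := Finset.sum_le_sum key
    _ = Vfun S σ := by
        rw [Finset.sum_add_distrib, ← Finset.sum_mul, ← Finset.mul_sum]
        have h1 : ∑ t ∈ I, (m t - σ / (S * a t)) = 0 := by
          rw [Finset.sum_sub_distrib, ← hσ]
          have : ∑ t ∈ I, σ / (S * a t) = σ := by
            have : ∀ t ∈ I, σ / (S * a t) = (σ / S) * (1 / a t) := by
              intro t ht; have := ha t ht; field_simp
            rw [Finset.sum_congr rfl this, ← Finset.mul_sum, ← hS]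
            field_simp
          rw [this, sub_self]
        rw [h1, mul_zero, add_zero]; rfl

lemma exp_quad {y : ℝ} (h : |y| ≤ 1/2) : Real.exp y ≤ 1 + y + 2 * y ^ 2 := by
  obtain ⟨h1, h2⟩ := abs_le.mp h
  have ha := Real.add_one_le_exp (-y)
  have hb : (0:ℝ) < 1 - y := by linarith
  have hc : Real.exp y * (1 - y) ≤ 1 := by
    have := Real.exp_pos y
    have : Real.exp y * Real.exp (-y) = 1 := by rw [← Real.exp_add]; simp
    nlinarith [Real.exp_pos y]
  have hd : Real.exp y ≤ 1 / (1 - y) := by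
    rw [le_div_iff₀ hb]; exact hc
  have he : 1 / (1 - y) ≤ 1 + y + 2 * y ^ 2 := by
    rw [div_le_iff₀ hb]; nlinarith
  linarith

lemma exp_quad' {u : ℝ} (h : |u| ≤ 1/4) : Real.exp (-(u + 2 * u ^ 2)) ≤ 1 - u := by
  obtain ⟨h1, h2⟩ := abs_le.mp h
  have hv : (0:ℝ) < 1 + (u + 2 * u ^ 2) := by nlinarith
  have ha := Real.add_one_le_exp (u + 2 * u ^ 2)
  have hb : Real.exp (-(u + 2 * u ^ 2)) * Real.exp (u + 2 * u ^ 2) = 1 := by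
    rw [← Real.exp_add]; ring_nf; exact Real.exp_zero
  have hc : Real.exp (-(u + 2 * u ^ 2)) ≤ 1 / (1 + (u + 2 * u ^ 2)) := by
    rw [le_div_iff₀ hv]
    nlinarith [Real.exp_pos (-(u + 2 * u ^ 2))]
  have hd : 1 / (1 + (u + 2 * u ^ 2)) ≤ 1 - u := by
    rw [div_le_iff₀ hv]; nlinarith
  linarith

/-! ### Measure-theoretic helpers -/

variable {Ω : Type*} [mΩ : MeasurableSpace Ω] {μ : Measure Ω} [IsProbabilityMeasure μ]

lemma integrable_of_bound (f : Ω → ℝ) (hf : AEStronglyMeasurable f μ) (C : ℝ)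
    (h : ∀ᵐ ω ∂μ, |f ω| ≤ C) : Integrable f μ :=
  Integrable.mono' (integrable_const C) hf (h.mono fun ω hω => by simpa using hω)

lemma integrable_expu {a : ℝ} (ha : 0 < a) {f : Ω → ℝ} (hf : Measurable f) {C : ℝ}
    (hb : ∀ ω, |f ω| ≤ C) : Integrable (fun ω => (1 / a) * (1 - Real.exp (-a * f ω))) μ := by
  refine integrable_of_bound _ ?_ ((1 / a) * (1 + Real.exp (a * C))) ?_
  · exact (measurable_const.mul (measurable_const.sub
      (Real.measurable_exp.comp (hf.const_mul (-a))))).aestronglyMeasurable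
  · filter_upwards with ω
    have hbb := abs_le.mp (hb ω)
    have h1 : Real.exp (-a * f ω) ≤ Real.exp (a * C) := by
      apply Real.exp_le_exp.mpr; nlinarith
    have h2 := Real.exp_pos (-a * f ω)
    rw [abs_mul, abs_of_pos (by positivity : (0:ℝ) < 1 / a)]
    apply mul_le_mul_of_nonneg_left _ (by positivity)
    rw [abs_le]; constructor <;> nlinarith

/-- Jensen-type upper bound on the value of any admissible allocation,
localized to a set `A` of positive measure. -/
lemma allocVal_le {T : ℕ} (hT : 1 ≤ T) {ℋ : ℕ → MeasurableSpace Ω} (hle : ∀ t, ℋ t ≤ mΩ)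
    {a : ℕ → ℝ} (ha : ∀ t ∈ Finset.Icc 1 T, 0 < a t)
    (B : ℕ → ℝ) {W : Ω → ℝ}
    {A : Set Ω} (hA : MeasurableSet A) (hApos : 0 < (μ A).toReal)
    {Y : ℕ → Ω → ℝ} (hY : IsAlloc μ T ℋ (fun t _ => B t) W Y) :
    allocVal μ T (fun t x => (1 / a t) * (1 - Real.exp (-(a t) * x))) (fun t _ => B t) Y ≤
      (1 - (μ A).toReal) * (∑ k ∈ Finset.Icc 1 T, 1 / a k) +
        (μ A).toReal * Vfun (∑ k ∈ Finset.Icc 1 T, 1 / a k)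
          ((∫ ω in A, W ω ∂μ) / (μ A).toReal) := by
  obtain ⟨hadapt, hsum⟩ := hY
  set I := Finset.Icc 1 T with hI
  have hIne : I.Nonempty := Finset.nonempty_Icc.mpr (by omega)
  set ρ := (μ A).toReal with hρ
  set S := ∑ k ∈ I, 1 / a k with hS
  set g : ℕ → Ω → ℝ := fun t ω => Y t ω / B t with hg
  have hgmeas : ∀ t ∈ I, Measurable (g t) := fun t ht =>
    (((hadapt t ht).1.mono (hle t) le_rfl)).div_const _
  have hgint : ∀ t ∈ I, Integrable (g t) μ := by
    intro t ht
    obtain ⟨C, hC⟩ := (hadapt t ht).2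
    refine integrable_of_bound _ ((hgmeas t ht).aestronglyMeasurable) (C * |B t|⁻¹) ?_
    filter_upwards [hC] with ω hω
    show |Y t ω / B t| ≤ _
    rw [abs_div, div_eq_mul_inv]
    exact mul_le_mul_of_nonneg_right hω (inv_nonneg.mpr (abs_nonneg _))
  have huint : ∀ t ∈ I, Integrable (fun ω => (1 / a t) * (1 - Real.exp (-(a t) * g t ω))) μ := by
    intro t ht
    obtain ⟨C, hC⟩ := (hadapt t ht).2
    have hat := ha t ht
    refine integrable_of_bound _ ?_ ((1 / a t) * (1 + Real.exp (a t * (C * |B t|⁻¹)))) ?_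
    · exact (measurable_const.mul (measurable_const.sub
        (Real.measurable_exp.comp ((hgmeas t ht).const_mul (-(a t)))))).aestronglyMeasurable
    · filter_upwards [hC] with ω hω
      have hb : |g t ω| ≤ C * |B t|⁻¹ := by
        show |Y t ω / B t| ≤ _
        rw [abs_div, div_eq_mul_inv]
        exact mul_le_mul_of_nonneg_right hω (inv_nonneg.mpr (abs_nonneg _))
      have h1 : Real.exp (-(a t) * g t ω) ≤ Real.exp (a t * (C * |B t|⁻¹)) := by
        apply Real.exp_le_exp.mpr
        have := abs_le.mp hb
        nlinarith
      have h2 := Real.exp_pos (-(a t) * g t ω)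
      rw [abs_mul, abs_of_pos (by positivity : (0:ℝ) < 1 / a t)]
      apply mul_le_mul_of_nonneg_left _ (by positivity)
      rw [abs_le]; constructor <;> nlinarith
  set m : ℕ → ℝ := fun t => (∫ ω in A, g t ω ∂μ) / ρ with hm
  have hρ0 : ρ ≠ 0 := ne_of_gt hApos
  have key1 : ∀ t ∈ I, ∫ ω in A, (1 / a t) * (1 - Real.exp (-(a t) * g t ω)) ∂μ ≤
      ρ * ((1 / a t) * (1 - Real.exp (-(a t) * m t))) := by
    intro t ht
    have hat := ha t ht
    have hint1 : IntegrableOn (fun ω => (1 / a t) * (1 - Real.exp (-(a t) * g t ω))) A μ :=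
      (huint t ht).integrableOn
    have hsub : Integrable (fun ω => g t ω - m t) μ := (hgint t ht).sub (integrable_const _)
    have hmul : Integrable (fun ω => Real.exp (-(a t) * m t) * (g t ω - m t)) μ :=
      hsub.const_mul _
    have hint2 : IntegrableOn (fun ω => (1 / a t) * (1 - Real.exp (-(a t) * m t)) +
        Real.exp (-(a t) * m t) * (g t ω - m t)) A μ :=
      ((integrable_const _).add hmul).integrableOn
    calc ∫ ω in A, (1 / a t) * (1 - Real.exp (-(a t) * g t ω)) ∂μ
        ≤ ∫ ω in A, ((1 / a t) * (1 - Real.exp (-(a t) * m t)) +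
            Real.exp (-(a t) * m t) * (g t ω - m t)) ∂μ :=
          setIntegral_mono_on hint1 hint2 hA (fun ω _ => expu_tangent hat _ _)
      _ = ρ * ((1 / a t) * (1 - Real.exp (-(a t) * m t))) := by
          rw [integral_add ((integrable_const _).integrableOn) hmul.integrableOn,
            setIntegral_const, integral_const_mul, integral_sub ((hgint t ht).integrableOn)
            ((integrable_const _).integrableOn), setIntegral_const]
          have : (∫ ω in A, g t ω ∂μ) = ρ * m t := by rw [hm]; field_simp
          rw [this, smul_eq_mul, smul_eq_mul, measureReal_def, ← hρ]
          ring
  have key2 : ∀ t ∈ I, ∫ ω in Aᶜ, (1 / a t) * (1 - Real.exp (-(a t) * g t ω)) ∂μ ≤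
      (1 - ρ) * (1 / a t) := by
    intro t ht
    have hat := ha t ht
    have hc : (μ Aᶜ).toReal = 1 - ρ := by
      have h1 := measure_add_measure_compl (μ := μ) hA
      have := congrArg ENNReal.toReal h1
      rw [ENNReal.toReal_add (measure_ne_top μ A) (measure_ne_top μ Aᶜ)] at this
      simp only [measure_univ, ENNReal.toReal_one] at this
      rw [← hρ] at this
      linarith
    calc ∫ ω in Aᶜ, (1 / a t) * (1 - Real.exp (-(a t) * g t ω)) ∂μ
        ≤ ∫ _ω in Aᶜ, (1 / a t) ∂μ :=
          setIntegral_mono_on (huint t ht).integrableOn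
            ((integrable_const _).integrableOn) hA.compl (fun ω _ => expu_le_inv hat _)
      _ = (1 - ρ) * (1 / a t) := by rw [setIntegral_const, measureReal_def, hc, smul_eq_mul]
  have key3 : ∀ t ∈ I, ∫ ω, (1 / a t) * (1 - Real.exp (-(a t) * g t ω)) ∂μ ≤
      (1 - ρ) * (1 / a t) + ρ * ((1 / a t) * (1 - Real.exp (-(a t) * m t))) := by
    intro t ht
    rw [← integral_add_compl hA (huint t ht)]
    have := add_le_add (key1 t ht) (key2 t ht)
    linarith
  have hmean : ∑ t ∈ I, m t = (∫ ω in A, W ω ∂μ) / ρ := by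
    have h1 : ∫ ω in A, (∑ t ∈ I, g t ω) ∂μ = ∑ t ∈ I, ∫ ω in A, g t ω ∂μ :=
      integral_finset_sum I (fun t ht => (hgint t ht).integrableOn)
    have h2 : ∫ ω in A, (∑ t ∈ I, g t ω) ∂μ = ∫ ω in A, W ω ∂μ :=
      integral_congr_ae (ae_restrict_of_ae hsum)
    simp only [hm, ← Finset.sum_div, ← h1, h2]
  unfold allocVal
  calc ∑ t ∈ I, ∫ ω, (1 / a t) * (1 - Real.exp (-(a t) * g t ω)) ∂μ
      ≤ ∑ t ∈ I, ((1 - ρ) * (1 / a t) + ρ * ((1 / a t) * (1 - Real.exp (-(a t) * m t)))) :=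
        Finset.sum_le_sum key3
    _ = (1 - ρ) * S + ρ * ∑ t ∈ I, (1 / a t) * (1 - Real.exp (-(a t) * m t)) := by
        rw [Finset.sum_add_distrib, ← Finset.mul_sum, ← Finset.mul_sum, hS]
    _ ≤ (1 - ρ) * S + ρ * Vfun S (∑ t ∈ I, m t) :=
        add_le_add_right (mul_le_mul_of_nonneg_left (by rw [hS]; exact sum_u_le hIne ha m)
          hApos.le) _
    _ = (1 - ρ) * S + ρ * Vfun S ((∫ ω in A, W ω ∂μ) / ρ) := by rw [hmean]

/-- every allocation value is bounded by `∑ 1/a_t`. -/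
lemma util_bddAbove {T : ℕ} {ℋ : ℕ → MeasurableSpace Ω} {a : ℕ → ℝ}
    (ha : ∀ t ∈ Finset.Icc 1 T, 0 < a t) (B : ℕ → ℝ) (W : Ω → ℝ) :
    ∀ s ∈ {s : ℝ | ∃ Y, IsAlloc μ T ℋ (fun t _ => B t) W Y ∧
      s = allocVal μ T (fun t x => (1 / a t) * (1 - Real.exp (-(a t) * x)))
        (fun t _ => B t) Y},
      s ≤ ∑ k ∈ Finset.Icc 1 T, 1 / a k := by
  rintro s ⟨Y, hY, rfl⟩
  unfold allocVal
  apply Finset.sum_le_sum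
  intro t ht
  have hat := ha t ht
  have hb : ∀ ω, (1 / a t) * (1 - Real.exp (-(a t) * (Y t ω / B t))) ≤ 1 / a t :=
    fun ω => expu_le_inv hat _
  by_cases hi : Integrable (fun ω => (1 / a t) * (1 - Real.exp (-(a t) * (Y t ω / B t)))) μ
  · calc ∫ ω, (1 / a t) * (1 - Real.exp (-(a t) * (Y t ω / B t))) ∂μ
        ≤ ∫ _ω, (1 / a t) ∂μ := integral_mono hi (integrable_const _) hb
      _ = 1 / a t := by simp
  · rw [integral_undef hi]; positivity

/-- construction of an explicit allocation: constants `x t` at dates `t ≠ T`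
and the remainder at date `T`.  Gives a lower bound on `Util`. -/
lemma util_lower {T : ℕ} (hT : 1 ≤ T) {ℋ : ℕ → MeasurableSpace Ω} (hle : ∀ t, ℋ t ≤ mΩ)
    {a : ℕ → ℝ} (ha : ∀ t ∈ Finset.Icc 1 T, 0 < a t)
    {B : ℕ → ℝ} (hB : ∀ t ∈ Finset.Icc 1 T, B t ≠ 0)
    {W : Ω → ℝ} (hWm : Measurable[ℋ T] W) (CW : ℝ) (hWb : ∀ ω, |W ω| ≤ CW)
    (x : ℕ → ℝ) :
    (∑ t ∈ (Finset.Icc 1 T).erase T, (1 / a t) * (1 - Real.exp (-(a t) * x t))) +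
      (∫ ω, (1 / a T) * (1 - Real.exp (-(a T) *
        (W ω - ∑ t ∈ (Finset.Icc 1 T).erase T, x t))) ∂μ) ≤
      Util μ T ℋ (fun t x => (1 / a t) * (1 - Real.exp (-(a t) * x))) (fun t _ => B t) W := by
  classical
  set I := Finset.Icc 1 T with hI
  have hTI : T ∈ I := Finset.mem_Icc.mpr ⟨hT, le_rfl⟩
  set σ := ∑ t ∈ I.erase T, x t with hσ
  set Y : ℕ → Ω → ℝ := fun t ω => if t = T then B T * (W ω - σ) else B t * x t with hY
  have hWmeas : Measurable W := hWm.mono (hle T) le_rfl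
  have halloc : IsAlloc μ T ℋ (fun t _ => B t) W Y := by
    constructor
    · intro t ht
      constructor
      · by_cases h : t = T
        · subst h
          simp only [hY, if_pos rfl]
          exact (hWm.sub measurable_const).const_mul _
        · simp only [hY, if_neg h]
          exact measurable_const
      · by_cases h : t = T
        · subst h
          refine ⟨|B t| * (CW + |σ|), ?_⟩
          filter_upwards with ω
          simp only [hY, if_pos rfl, abs_mul]
          apply mul_le_mul_of_nonneg_left _ (abs_nonneg _)
          calc |W ω - σ| ≤ |W ω| + |σ| := abs_sub _ _
            _ ≤ CW + |σ| := by have := hWb ω; linarith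
        · exact ⟨|B t * x t|, by filter_upwards with ω; simp [hY, if_neg h]⟩
    · filter_upwards with ω
      show ∑ t ∈ I, Y t ω / B t = W ω
      rw [← Finset.add_sum_erase I _ hTI]
      have h1 : Y T ω / B T = W ω - σ := by
        simp only [hY, if_pos rfl]
        field_simp [hB T hTI]
      have h2 : ∀ t ∈ I.erase T, Y t ω / B t = x t := by
        intro t ht
        have htI := Finset.mem_of_mem_erase ht
        have htne := Finset.ne_of_mem_erase ht
        simp only [hY, if_neg htne]
        field_simp [hB t htI]
      rw [h1, Finset.sum_congr rfl h2]
      ring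
  have hval : allocVal μ T (fun t x => (1 / a t) * (1 - Real.exp (-(a t) * x)))
      (fun t _ => B t) Y =
      (∑ t ∈ I.erase T, (1 / a t) * (1 - Real.exp (-(a t) * x t))) +
        (∫ ω, (1 / a T) * (1 - Real.exp (-(a T) * (W ω - σ))) ∂μ) := by
    unfold allocVal
    rw [← Finset.add_sum_erase I _ hTI]
    have h1 : (∫ ω, (1 / a T) * (1 - Real.exp (-(a T) * (Y T ω / B T))) ∂μ) =
        ∫ ω, (1 / a T) * (1 - Real.exp (-(a T) * (W ω - σ))) ∂μ := by
      apply integral_congr_ae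
      filter_upwards with ω
      have : Y T ω / B T = W ω - σ := by
        simp only [hY, if_pos rfl]; field_simp [hB T hTI]
      rw [this]
    have h2 : ∀ t ∈ I.erase T,
        (∫ ω, (1 / a t) * (1 - Real.exp (-(a t) * (Y t ω / B t))) ∂μ) =
        (1 / a t) * (1 - Real.exp (-(a t) * x t)) := by
      intro t ht
      have htI := Finset.mem_of_mem_erase ht
      have htne := Finset.ne_of_mem_erase ht
      have : ∀ ω : Ω, Y t ω / B t = x t := by
        intro ω; simp only [hY, if_neg htne]; field_simp [hB t htI]
      simp only [this]
      simp
    rw [h1, Finset.sum_congr rfl h2]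
    ring
  apply le_csSup
  · exact ⟨∑ k ∈ I, 1 / a k, fun s hs => util_bddAbove ha B W s hs⟩
  · exact ⟨Y, halloc, hval.symm⟩

/-- the set of allocation values is nonempty when `W` is bounded and `ℋ T`-measurable. -/
lemma util_set_nonempty {T : ℕ} (hT : 1 ≤ T) {ℋ : ℕ → MeasurableSpace Ω}
    {B : ℕ → ℝ} (hB : ∀ t ∈ Finset.Icc 1 T, B t ≠ 0)
    {W : Ω → ℝ} (hWm : Measurable[ℋ T] W) (CW : ℝ) (hWb : ∀ ω, |W ω| ≤ CW)
    (u : ℕ → ℝ → ℝ) :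
    {s : ℝ | ∃ Y, IsAlloc μ T ℋ (fun t _ => B t) W Y ∧
      s = allocVal μ T u (fun t _ => B t) Y}.Nonempty := by
  classical
  set I := Finset.Icc 1 T with hI
  have hTI : T ∈ I := Finset.mem_Icc.mpr ⟨hT, le_rfl⟩
  set Y : ℕ → Ω → ℝ := fun t ω => if t = T then B T * W ω else 0 with hY
  refine ⟨allocVal μ T u (fun t _ => B t) Y, Y, ?_, rfl⟩
  constructor
  · intro t ht
    constructor
    · by_cases h : t = T
      · subst h
        simp only [hY, if_pos rfl]
        exact hWm.const_mul _
      · simp only [hY, if_neg h]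
        exact measurable_const
    · by_cases h : t = T
      · subst h
        refine ⟨|B t| * CW, ?_⟩
        filter_upwards with ω
        simp only [hY, if_pos rfl, abs_mul]
        exact mul_le_mul_of_nonneg_left (hWb ω) (abs_nonneg _)
      · exact ⟨0, by filter_upwards with ω; simp [hY, if_neg h]⟩
  · filter_upwards with ω
    show ∑ t ∈ I, Y t ω / B t = W ω
    rw [← Finset.add_sum_erase I _ hTI]
    have h1 : Y T ω / B T = W ω := by
      simp only [hY, if_pos rfl]
      field_simp [hB T hTI]
    have h2 : ∀ t ∈ I.erase T, Y t ω / B t = 0 := by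
      intro t ht
      have htne := Finset.ne_of_mem_erase ht
      simp [hY, if_neg htne]
    rw [h1, Finset.sum_congr rfl h2]
    simp

end ExpPremiumHelpers

set_option maxHeartbeats 1000000 in
/-- Behavior of the exponential-utility premium in the risk aversion parameter
(Theorem 4.6 (a)-(c)): `E[Z] ≤ H_α(Z) ≤ H_∞(Z)`, with `H_α(Z) → E[Z]` as `α → 0+`
and `H_α(Z) → H_∞(Z)` as `α → ∞`. -/
theorem premium_risk_aversion_bounds_and_limits
    {Ω : Type*} [mΩ : MeasurableSpace Ω] (μ : Measure Ω) [IsProbabilityMeasure μ]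
    (T : ℕ) (hT : 1 ≤ T)
    (τ : Ω → ℝ) (hτmeas : Measurable τ) (hτpos : ∀ ω, 0 < τ ω)
    (hτcont : ∀ s : ℝ, 0 ≤ s → μ {ω | τ ω = s} = 0)
    (D : ℕ → Ω → ℝ) (hD : ∀ t ω, D t ω = if τ ω ≤ (t : ℝ) then 1 else 0)
    (ℋ : ℕ → MeasurableSpace Ω)
    (hℋ : ∀ t, ℋ t =
      ⨆ s ∈ Finset.range (t + 1), MeasurableSpace.comap (D s) (inferInstance : MeasurableSpace ℝ))
    (q p : ℕ → ℝ)
    (hsurv : ∀ t, t < T → 0 < μ {ω | (t : ℝ) < τ ω})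
    (hq : ∀ t, t < T → q t =
      (μ {ω | (t : ℝ) < τ ω ∧ τ ω ≤ (t : ℝ) + 1}).toReal / (μ {ω | (t : ℝ) < τ ω}).toReal)
    (hp : ∀ t, t < T → p t = 1 - q t)
    (hq01 : ∀ t, t < T → 0 < q t ∧ q t < 1)
    -- condition (R): deterministic, nonnegative interest rates
    (r : ℕ → ℝ) (hr_nonneg : ∀ t ∈ Finset.Icc 1 T, 0 ≤ r t)
    (B : ℕ → ℝ) (hB : ∀ t, B t = ∏ k ∈ Finset.Icc 1 t, (1 + r k))
    (z : ℕ → ℝ) (Z : Ω → ℝ)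
    (hZ : ∀ ω, Z ω =
      (∑ t ∈ Finset.Icc 1 T, if (t : ℝ) - 1 < τ ω ∧ τ ω ≤ (t : ℝ) then z t else 0) +
      (if (T : ℝ) < τ ω then z (T + 1) else 0))
    (w : ℝ) (Hfun : (ℕ → ℝ) → ℝ)
    -- `Hfun a` is the indifference price of `Z` for the exponential utility with
    -- risk aversion parameter `a ∈ (0,∞)^T`
    (hHfun : ∀ a : ℕ → ℝ, (∀ t ∈ Finset.Icc 1 T, 0 < a t) →
      Util μ T ℋ (fun t x => (1 / a t) * (1 - Real.exp (-(a t) * x))) (fun t _ => B t)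
          (fun ω => w + Hfun a - Z ω) =
        Util μ T ℋ (fun t x => (1 / a t) * (1 - Real.exp (-(a t) * x))) (fun t _ => B t)
          (fun _ => w))
    (Hinf : ℝ)
    (hHinf : Hinf = (Finset.Icc 1 (T + 1)).sup' (Finset.nonempty_Icc.mpr (by omega)) z) :
    (∀ a : ℕ → ℝ, (∀ t ∈ Finset.Icc 1 T, 0 < a t) →
      (∫ ω, Z ω ∂μ) ≤ Hfun a ∧ Hfun a ≤ Hinf) ∧
    (∀ ε > 0, ∃ δ > 0, ∀ a : ℕ → ℝ, (∀ t ∈ Finset.Icc 1 T, 0 < a t) →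
      (∀ t ∈ Finset.Icc 1 T, a t < δ) → |Hfun a - ∫ ω, Z ω ∂μ| < ε) ∧
    (∀ ε > 0, ∃ K : ℝ, ∀ a : ℕ → ℝ, (∀ t ∈ Finset.Icc 1 T, 0 < a t) →
      (∀ t ∈ Finset.Icc 1 T, K < a t) → |Hfun a - Hinf| < ε) := by
  classical
  set I := Finset.Icc 1 T with hIdef
  have hIne : I.Nonempty := Finset.nonempty_Icc.mpr hT
  have hTI : T ∈ I := Finset.mem_Icc.mpr ⟨hT, le_rfl⟩
  -- measurability of the default indicators and the filtration
  have hDmeas : ∀ s : ℕ, Measurable (D s) := by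
    intro s
    have hds : D s = fun ω => if τ ω ≤ (s:ℝ) then (1:ℝ) else 0 := funext (hD s)
    rw [hds]
    exact Measurable.ite (measurableSet_le hτmeas measurable_const)
      measurable_const measurable_const
  have hle : ∀ t, ℋ t ≤ mΩ := by
    intro t
    rw [hℋ t]
    apply iSup_le; intro s; apply iSup_le; intro _
    exact measurable_iff_comap_le.mp (hDmeas s)
  have hDmeasH : ∀ s t : ℕ, s ∈ Finset.range (t+1) → Measurable[ℋ t] (D s) := by
    intro s t hs
    rw [hℋ t]
    refine Measurable.mono (measurable_iff_comap_le.mpr le_rfl) ?_ le_rfl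
    exact le_iSup₂ (f := fun s (_ : s ∈ Finset.range (t+1)) =>
      MeasurableSpace.comap (D s) (inferInstance : MeasurableSpace ℝ)) s hs
  -- interest rates: B t ≠ 0 on 𝕋
  have hBpos : ∀ t ∈ I, 0 < B t := by
    intro t ht
    rw [hB t]
    apply Finset.prod_pos
    intro k hk
    have hk2 := Finset.mem_Icc.mp hk
    have ht2 := Finset.mem_Icc.mp ht
    have : 0 ≤ r k := hr_nonneg k (Finset.mem_Icc.mpr ⟨hk2.1, le_trans hk2.2 ht2.2⟩)
    linarith
  have hBne : ∀ t ∈ I, B t ≠ 0 := fun t ht => ne_of_gt (hBpos t ht)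
  -- the value of `Z` on the atoms
  have hZatom : ∀ k ∈ I, ∀ ω, (k:ℝ) - 1 < τ ω → τ ω ≤ (k:ℝ) → Z ω = z k := by
    intro k hk ω h1 h2
    obtain ⟨hk1, hk2⟩ := Finset.mem_Icc.mp hk
    have hkT : (k:ℝ) ≤ (T:ℝ) := by exact_mod_cast hk2
    rw [hZ ω, if_neg (by push_neg; linarith), add_zero]
    rw [Finset.sum_eq_single_of_mem k hk]
    · rw [if_pos ⟨h1, h2⟩]
    · intro t ht hne
      rw [if_neg]
      rintro ⟨g1, g2⟩
      apply hne
      have d1 : (k:ℝ) < (t:ℝ) + 1 := by linarith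
      have d2 : (t:ℝ) < (k:ℝ) + 1 := by linarith
      have d1' : k < t + 1 := by exact_mod_cast d1
      have d2' : t < k + 1 := by exact_mod_cast d2
      omega
  have hZtail : ∀ ω, (T:ℝ) < τ ω → Z ω = z (T+1) := by
    intro ω h
    rw [hZ ω, if_pos h]
    have hz : ∀ t ∈ I, (if (t:ℝ) - 1 < τ ω ∧ τ ω ≤ (t:ℝ) then z t else 0) = 0 := by
      intro t ht
      rw [if_neg]
      rintro ⟨_, g2⟩
      have ht2 := (Finset.mem_Icc.mp ht).2
      have : (t:ℝ) ≤ (T:ℝ) := by exact_mod_cast ht2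
      linarith
    rw [Finset.sum_congr rfl hz, Finset.sum_const_zero, zero_add]
  have hZval : ∀ ω, ∃ k ∈ Finset.Icc 1 (T+1), Z ω = z k := by
    intro ω
    rcases le_or_gt (τ ω) (T:ℝ) with h | h
    · have hτ0 := hτpos ω
      refine ⟨⌈τ ω⌉₊, ?_, ?_⟩
      · rw [Finset.mem_Icc]
        constructor
        · exact Nat.one_le_ceil_iff.mpr hτ0
        · exact le_trans (Nat.ceil_le.mpr h) (by omega)
      · have hkI : ⌈τ ω⌉₊ ∈ I := Finset.mem_Icc.mpr
          ⟨Nat.one_le_ceil_iff.mpr hτ0, Nat.ceil_le.mpr h⟩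
        refine hZatom _ hkI ω ?_ (Nat.le_ceil _)
        have := Nat.ceil_lt_add_one (le_of_lt hτ0)
        linarith
    · exact ⟨T+1, Finset.mem_Icc.mpr ⟨by omega, le_rfl⟩, hZtail ω h⟩
  -- bounds for Z
  set MZ := ∑ t ∈ Finset.Icc 1 (T+1), |z t| with hMZdef
  have hzleM : ∀ t ∈ Finset.Icc 1 (T+1), |z t| ≤ MZ :=
    fun t ht => Finset.single_le_sum (fun s _ => abs_nonneg (z s)) ht
  have hZabs : ∀ ω, |Z ω| ≤ MZ := by
    intro ω
    obtain ⟨k, hk, he⟩ := hZval ω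
    rw [he]; exact hzleM k hk
  have hZsup : ∀ ω, Z ω ≤ Hinf := by
    intro ω
    obtain ⟨k, hk, he⟩ := hZval ω
    rw [he, hHinf]
    exact Finset.le_sup' z hk
  obtain ⟨b, hb, he⟩ := Finset.exists_mem_eq_sup' (s := Finset.Icc 1 (T+1))
    (Finset.nonempty_Icc.mpr (by omega)) z
  have hHb : Hinf = z b := by rw [hHinf]; exact he
  obtain ⟨hb1, hb2⟩ := Finset.mem_Icc.mp hb
  have hHinfabs : |Hinf| ≤ MZ := by
    rw [hHb]
    exact hzleM b hb
  -- measurability of Z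
  have hZmeasT : Measurable[ℋ T] Z := by
    have hZD : Z = fun ω => (∑ t ∈ I, z t * (D t ω - D (t-1) ω)) + z (T+1) * (1 - D T ω) := by
      funext ω
      rw [hZ ω]
      congr 1
      · apply Finset.sum_congr rfl
        intro t ht
        obtain ⟨ht1, ht2⟩ := Finset.mem_Icc.mp ht
        rw [hD t ω, hD (t-1) ω]
        have hc : ((t-1 : ℕ) : ℝ) = (t:ℝ) - 1 := by
          have : ((t-1 : ℕ) : ℝ) = (t:ℝ) - (1:ℕ) := Nat.cast_sub ht1
          simpa using this
        rw [hc]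
        by_cases p1 : τ ω ≤ (t:ℝ) - 1
        · rw [if_pos (by linarith : τ ω ≤ (t:ℝ)), if_pos p1,
            if_neg (by rintro ⟨q1, _⟩; linarith)]
          ring
        · push_neg at p1
          by_cases p2 : τ ω ≤ (t:ℝ)
          · rw [if_pos p2, if_neg (not_le.mpr p1), if_pos ⟨p1, p2⟩]
            ring
          · rw [if_neg p2, if_neg (not_le.mpr p1),
              if_neg (by rintro ⟨_, q2⟩; exact p2 q2)]
            ring
      · rw [hD T ω]
        rcases le_or_gt (τ ω) (T:ℝ) with p | p
        · rw [if_pos p, if_neg (not_lt.mpr p)]; ring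
        · rw [if_neg (not_le.mpr p), if_pos p]; ring
    rw [hZD]
    have hDT : ∀ s ∈ Finset.range (T+1), Measurable[ℋ T] (D s) := fun s hs => hDmeasH s T hs
    apply Measurable.add
    · apply Finset.measurable_sum
      intro t ht
      obtain ⟨ht1, ht2⟩ := Finset.mem_Icc.mp ht
      exact ((hDT t (Finset.mem_range.mpr (by omega))).sub
        (hDT (t-1) (Finset.mem_range.mpr (by omega)))).const_mul _
    · exact ((hDT T (Finset.mem_range.mpr (by omega))).const_sub 1).const_mul _
  have hZmeas : Measurable Z := hZmeasT.mono (hle T) le_rfl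
  have hZint : Integrable Z μ := integrable_of_bound _ hZmeas.aestronglyMeasurable MZ
    (by filter_upwards with ω; exact hZabs ω)
  set E := ∫ ω, Z ω ∂μ with hE
  have hEabs : |E| ≤ MZ := by
    have h := norm_integral_le_of_norm_le_const (μ := μ) (f := Z) (C := MZ)
      (by filter_upwards with ω; simpa using hZabs ω)
    simpa using h
  -- the atom of maximal payment has positive probability
  obtain ⟨A, hAmeas, hApos, hAZ⟩ :
      ∃ A : Set Ω, MeasurableSet A ∧ 0 < (μ A).toReal ∧ ∀ ω ∈ A, Z ω = Hinf := by
    rcases le_or_gt b T with hcase | hcase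
    · -- b ≤ T : use the atom {b-1 < τ ≤ b}
      set t0 := b - 1 with ht0
      have ht0T : t0 < T := by omega
      have hcast1 : ((t0:ℕ):ℝ) = (b:ℝ) - 1 := by
        have : ((t0:ℕ):ℝ) = (b:ℝ) - (1:ℕ) := Nat.cast_sub hb1
        simpa using this
      have hcast2 : ((t0:ℕ):ℝ) + 1 = (b:ℝ) := by rw [hcast1]; ring
      refine ⟨{ω | ((t0:ℕ):ℝ) < τ ω ∧ τ ω ≤ ((t0:ℕ):ℝ) + 1}, ?_, ?_, ?_⟩
      · exact (measurableSet_lt measurable_const hτmeas).inter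
          (measurableSet_le hτmeas measurable_const)
      · have hqpos := (hq01 t0 ht0T).1
        rw [hq t0 ht0T] at hqpos
        by_contra hcon
        push_neg at hcon
        have h0 : (μ {ω | ((t0:ℕ):ℝ) < τ ω ∧ τ ω ≤ ((t0:ℕ):ℝ) + 1}).toReal = 0 :=
          le_antisymm hcon ENNReal.toReal_nonneg
        rw [h0] at hqpos
        simp at hqpos
      · rintro ω ⟨w1, w2⟩
        rw [hHb]
        have hbI : b ∈ I := Finset.mem_Icc.mpr ⟨hb1, hcase⟩
        exact hZatom b hbI ω (by rw [← hcast1]; exact w1) (by rw [← hcast2]; exact w2)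
    · -- b = T + 1 : use the tail {T < τ}
      have hbT : b = T + 1 := by omega
      set t1 := T - 1 with ht1
      have ht1T : t1 < T := by omega
      have hc1 : ((t1:ℕ):ℝ) + 1 = (T:ℝ) := by
        have : ((t1:ℕ):ℝ) = (T:ℝ) - (1:ℕ) := Nat.cast_sub hT
        rw [this]; simp
      refine ⟨{ω | (T:ℝ) < τ ω}, measurableSet_lt measurable_const hτmeas, ?_, ?_⟩
      · -- positivity from q_{T-1} < 1
        set N := {ω | ((t1:ℕ):ℝ) < τ ω ∧ τ ω ≤ ((t1:ℕ):ℝ) + 1} with hN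
        set G := {ω | (T:ℝ) < τ ω} with hG
        set Dn := {ω | ((t1:ℕ):ℝ) < τ ω} with hDn
        have hNmeas : MeasurableSet N := (measurableSet_lt measurable_const hτmeas).inter
          (measurableSet_le hτmeas measurable_const)
        have hGmeas : MeasurableSet G := measurableSet_lt measurable_const hτmeas
        have hunion : Dn = N ∪ G := by
          ext ω
          simp only [hN, hG, hDn, Set.mem_setOf_eq, Set.mem_union]
          constructor
          · intro hω
            rcases le_or_gt (τ ω) (((t1:ℕ):ℝ) + 1) with hh | hh
            · exact Or.inl ⟨hω, hh⟩
            · exact Or.inr (by rw [← hc1]; exact hh)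
          · rintro (⟨hω, _⟩ | hω)
            · exact hω
            · rw [← hc1] at hω; linarith
        have hdisj : Disjoint N G := by
          rw [Set.disjoint_left]
          rintro ω ⟨_, w2⟩ wG
          rw [hc1] at w2
          exact absurd wG (not_lt.mpr w2)
        have hsplit : μ Dn = μ N + μ G := by rw [hunion, measure_union hdisj hGmeas]
        have htr : (μ Dn).toReal = (μ N).toReal + (μ G).toReal := by
          rw [hsplit, ENNReal.toReal_add (measure_ne_top μ N) (measure_ne_top μ G)]
        have hq1 := (hq01 t1 ht1T).2
        rw [hq t1 ht1T] at hq1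
        have hDnpos : 0 < (μ Dn).toReal :=
          ENNReal.toReal_pos (ne_of_gt (hsurv t1 ht1T)) (measure_ne_top μ _)
        have hnum : (μ N).toReal < (μ Dn).toReal := by
          by_contra hcon
          push_neg at hcon
          have : (1:ℝ) ≤ (μ N).toReal / (μ Dn).toReal :=
            (one_le_div hDnpos).mpr hcon
          linarith
        linarith
      · intro ω hω
        rw [hHb, hbT]
        exact hZtail ω hω
  -- ρ : probability of the maximal atom
  set ρ := (μ A).toReal with hρdef
  have hρ1 : ρ ≤ 1 := by
    rw [hρdef]
    calc (μ A).toReal ≤ (μ Set.univ).toReal := by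
          apply ENNReal.toReal_mono (measure_ne_top μ _) (measure_mono (Set.subset_univ A))
      _ = 1 := by simp
  -- the master facts, for each admissible risk-aversion vector
  have master : ∀ a : ℕ → ℝ, (∀ t ∈ Finset.Icc 1 T, 0 < a t) →
      (E ≤ Hfun a ∧ Hfun a ≤ Hinf) ∧
      (∫ ω, (1 / a T) * (1 - Real.exp (-(a T) * (w + Hfun a - Z ω))) ∂μ ≤ w) ∧
      (Vfun (∑ k ∈ I, 1 / a k) w ≤
        (1 - ρ) * (∑ k ∈ I, 1 / a k) +
          ρ * Vfun (∑ k ∈ I, 1 / a k) (w + Hfun a - Hinf)) := by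
    intro a ha
    have hEq := hHfun a ha
    set S := ∑ k ∈ I, 1 / a k with hSdef
    have hSpos : 0 < S := Finset.sum_pos (fun t ht => by have := ha t ht; positivity) hIne
    set H := Hfun a with hHdef
    have haT : 0 < a T := ha T hTI
    have hWHm : Measurable[ℋ T] (fun ω => w + H - Z ω) := measurable_const.sub hZmeasT
    have hWHmm : Measurable (fun ω => w + H - Z ω) := measurable_const.sub hZmeas
    set CW := |w + H| + MZ with hCWdef
    have hWHb : ∀ ω, |w + H - Z ω| ≤ CW := by
      intro ω
      calc |w + H - Z ω| ≤ |w + H| + |Z ω| := abs_sub _ _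
        _ ≤ CW := by have := hZabs ω; rw [hCWdef]; linarith
    have hWcm : Measurable[ℋ T] (fun _ : Ω => w) := measurable_const
    have hWcb : ∀ ω : Ω, |(fun _ : Ω => w) ω| ≤ |w| := fun ω => le_refl _
    -- balanced allocation identity
    have hbal : ∀ s : ℝ,
        (∑ t ∈ I.erase T, (1 / a t) * (1 - Real.exp (-(a t) * (s / (S * a t))))) +
          (1 / a T) * (1 - Real.exp (-(a T) *
            (s - ∑ t ∈ I.erase T, s / (S * a t)))) = Vfun S s := by
      intro s
      have hsplit : 1 / a T + ∑ t ∈ I.erase T, 1 / a t = S :=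
        Finset.add_sum_erase I (fun t => 1 / a t) hTI
      have hterm : ∀ t ∈ I.erase T, s / (S * a t) = (s / S) * (1 / a t) := by
        intro t ht
        have hat := ha t (Finset.mem_of_mem_erase ht)
        field_simp
      have hσ : ∑ t ∈ I.erase T, s / (S * a t) = (s / S) * (S - 1 / a T) := by
        rw [Finset.sum_congr rfl hterm, ← Finset.mul_sum]
        congr 1
        linarith
      have hrem : s - ∑ t ∈ I.erase T, s / (S * a t) = s / (S * a T) := by
        rw [hσ]
        field_simp
        ring
      rw [hrem, Finset.sum_erase_add I
        (fun t => (1 / a t) * (1 - Real.exp (-(a t) * (s / (S * a t))))) hTI, hSdef]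
      exact sum_u_eq hIne ha s
    -- upper bound for `Util` of a bounded `ℋ T`-measurable claim
    have hUtil_le : ∀ (W : Ω → ℝ), Measurable[ℋ T] W → (∀ ω, |W ω| ≤ CW + |w|) →
        ∀ (A' : Set Ω), MeasurableSet A' → 0 < (μ A').toReal →
        Util μ T ℋ (fun t x => (1 / a t) * (1 - Real.exp (-(a t) * x))) (fun t _ => B t) W ≤
          (1 - (μ A').toReal) * S + (μ A').toReal *
            Vfun S ((∫ ω in A', W ω ∂μ) / (μ A').toReal) := by
      intro W hWm hWb A' hA' hA'pos
      apply csSup_le (util_set_nonempty hT hBne hWm (CW + |w|) hWb _)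
      rintro s ⟨Y, hY, rfl⟩
      have h := allocVal_le hT hle ha B hA' hA'pos hY
      rw [← hSdef] at h
      exact h
    -- `Util` of the constant claim `w` equals `Vfun S w`
    have hUc_ge : Vfun S w ≤
        Util μ T ℋ (fun t x => (1 / a t) * (1 - Real.exp (-(a t) * x)))
          (fun t _ => B t) (fun _ => w) := by
      have hlow := util_lower (μ := μ) hT hle ha hBne hWcm |w| hWcb (fun t => w / (S * a t))
      simp only [integral_const, measure_univ, ENNReal.toReal_one, probReal_univ, one_smul] at hlow
      exact le_trans (le_of_eq (hbal w).symm) hlow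
    have hUc_le : Util μ T ℋ (fun t x => (1 / a t) * (1 - Real.exp (-(a t) * x)))
        (fun t _ => B t) (fun _ : Ω => w) ≤ Vfun S w := by
      have h := hUtil_le (fun _ => w) hWcm
        (fun ω => by simp only [abs_nonneg, le_add_iff_nonneg_left]; positivity) Set.univ
        MeasurableSet.univ (by simp)
      simp only [measure_univ, ENNReal.toReal_one, Measure.restrict_univ, integral_const,
        measure_univ, ENNReal.toReal_one, probReal_univ, one_smul, div_one, sub_self, zero_mul, one_mul,
        zero_add] at h
      exact h
    -- chain (i):  Vfun S w ≤ Util (w + H - Z) ≤ Vfun S (w + H - E)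
    have hWHb' : ∀ ω, |w + H - Z ω| ≤ CW + |w| := fun ω =>
      le_trans (hWHb ω) (le_add_of_nonneg_right (abs_nonneg w))
    have hmeanWH : (∫ ω, (w + H - Z ω) ∂μ) = w + H - E := by
      rw [integral_sub (integrable_const _) hZint, integral_const]
      simp [hE]
    have hchain1 : Vfun S w ≤ Vfun S (w + H - E) := by
      have h1 := hUtil_le (fun ω => w + H - Z ω) hWHm hWHb' Set.univ MeasurableSet.univ (by simp)
      simp only [measure_univ, ENNReal.toReal_one, Measure.restrict_univ, div_one, sub_self,
        zero_mul, one_mul, zero_add] at h1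
      rw [hmeanWH] at h1
      exact le_trans (le_trans hUc_ge hEq.symm.le) h1
    have hP1 : E ≤ H := by
      have := (Vfun_le_iff hSpos).mp hchain1
      linarith
    -- chain (ii): Vfun S (w + H - Hinf) ≤ Util (w + H - Z) ≤ Vfun S w
    have hchain2 : Vfun S (w + H - Hinf) ≤ Vfun S w := by
      set σ0 := ∑ t ∈ I.erase T, (w + H - Hinf) / (S * a t) with hσ0
      have hlow := util_lower (μ := μ) hT hle ha hBne hWHm CW hWHb
        (fun t => (w + H - Hinf) / (S * a t))
      have hintg : Integrable (fun ω => (1 / a T) *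
          (1 - Real.exp (-(a T) * ((w + H - Z ω) - σ0)))) μ :=
        integrable_expu haT (hWHmm.sub measurable_const) (C := CW + |σ0|)
          (fun ω => le_trans (abs_sub _ _) (by have := hWHb ω; linarith))
      have hmono : (1 / a T) * (1 - Real.exp (-(a T) * ((w + H - Hinf) - σ0))) ≤
          ∫ ω, (1 / a T) * (1 - Real.exp (-(a T) * ((w + H - Z ω) - σ0))) ∂μ := by
        calc (1 / a T) * (1 - Real.exp (-(a T) * ((w + H - Hinf) - σ0)))
            = ∫ _ω, (1 / a T) * (1 - Real.exp (-(a T) * ((w + H - Hinf) - σ0))) ∂μ := by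
              rw [integral_const]; simp
          _ ≤ _ := by
              apply integral_mono (integrable_const _) hintg
              intro ω
              exact expu_mono haT (by have := hZsup ω; linarith)
      have hstep : Vfun S (w + H - Hinf) ≤
          Util μ T ℋ (fun t x => (1 / a t) * (1 - Real.exp (-(a t) * x)))
            (fun t _ => B t) (fun ω => w + H - Z ω) :=
        le_trans (le_of_eq (hbal (w + H - Hinf)).symm)
          (le_trans (add_le_add_right hmono _) hlow)
      exact le_trans hstep (le_trans hEq.le hUc_le)
    have hP2 : H ≤ Hinf := by
      have := (Vfun_le_iff hSpos).mp hchain2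
      linarith
    refine ⟨⟨hP1, hP2⟩, ?_, ?_⟩
    · -- (iii) the one-shot lower bound gives  ∫ u_T(w+H-Z) ≤ w
      have hlow := util_lower (μ := μ) hT hle ha hBne hWHm CW hWHb (fun _ => 0)
      simp only [mul_zero, Real.exp_zero, sub_self, Finset.sum_const_zero, sub_zero,
        zero_add] at hlow
      have hVw : Vfun S w ≤ w := Vfun_le_self hSpos w
      exact le_trans hlow (le_trans hEq.le (le_trans hUc_le hVw))
    · -- (iv) localization at the maximal atom
      have h := hUtil_le (fun ω => w + H - Z ω) hWHm hWHb' A hAmeas hApos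
      have hconst : (∫ ω in A, (w + H - Z ω) ∂μ) = ρ * (w + H - Hinf) := by
        have hcg : ∀ ω ∈ A, (w + H - Z ω) = w + H - Hinf := fun ω hω => by
          rw [hAZ ω hω]
        rw [setIntegral_congr_fun hAmeas hcg, setIntegral_const, measureReal_def, smul_eq_mul, hρdef]
      rw [hconst] at h
      have hdiv : ρ * (w + H - Hinf) / ρ = w + H - Hinf := by
        field_simp
      rw [hdiv] at h
      exact le_trans (le_trans hUc_ge hEq.symm.le) h
  have hMZ0 : 0 ≤ MZ := Finset.sum_nonneg fun t _ => abs_nonneg _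
  refine ⟨fun a ha => (master a ha).1, ?_, ?_⟩
  · -- part (b): small risk aversion
    intro ε hε
    set M := MZ + |w| + 1 with hMdef
    have hM1 : (1:ℝ) ≤ M := by
      have := abs_nonneg w
      rw [hMdef]; linarith
    have hM0 : (0:ℝ) < M := by linarith
    have hwM : |w| ≤ M := by rw [hMdef]; linarith
    have hZM : ∀ ω, |Z ω| ≤ M := fun ω => by
      have := hZabs ω; have := abs_nonneg w; rw [hMdef]; linarith
    have hEM : |E| ≤ M := by have := abs_nonneg w; rw [hMdef]; linarith
    have hM2 : (0:ℝ) < 10*M^2 := by nlinarith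
    have hM4 : (0:ℝ) < 4*M := by linarith
    refine ⟨min (1/(4*M)) (ε/(10*M^2)),
      lt_min (div_pos one_pos hM4) (div_pos hε hM2), ?_⟩
    intro a ha hsmall
    obtain ⟨⟨hP1, hP2⟩, hP3, _⟩ := master a ha
    set α := a T with hαdef
    have hαpos : 0 < α := ha T hTI
    have hαδ1 : α ≤ 1/(4*M) := le_trans (hsmall T hTI).le (min_le_left _ _)
    have hαδ2 : α < ε/(10*M^2) := lt_of_lt_of_le (hsmall T hTI) (min_le_right _ _)
    have hexpZint : Integrable (fun ω => Real.exp (α * Z ω)) μ := by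
      refine integrable_of_bound _ ((Real.measurable_exp.comp (hZmeas.const_mul α)).aestronglyMeasurable) (Real.exp (α*M)) ?_
      filter_upwards with ω
      rw [abs_of_pos (Real.exp_pos _)]
      apply Real.exp_le_exp.mpr
      have := abs_le.mp (hZM ω)
      nlinarith
    set J := ∫ ω, Real.exp (α * Z ω) ∂μ with hJdef
    have hcalc : ∫ ω, (1/α)*(1-Real.exp (-α*(w + Hfun a - Z ω))) ∂μ =
        (1/α)*(1 - Real.exp (-α*(w+Hfun a))*J) := by
      have hpt : ∀ ω, (1/α)*(1-Real.exp (-α*(w + Hfun a - Z ω))) =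
          (1/α) - ((1/α)*Real.exp (-α*(w+Hfun a)))*Real.exp (α*Z ω) := by
        intro ω
        rw [show -α*(w + Hfun a - Z ω) = (-α*(w+Hfun a)) + α*Z ω by ring, Real.exp_add]
        ring
      simp only [hpt]
      rw [integral_sub (integrable_const _) (hexpZint.const_mul _), integral_const,
        integral_const_mul]
      simp only [measure_univ, ENNReal.toReal_one, probReal_univ, smul_eq_mul, one_mul, ← hJdef]
      ring
    rw [hcalc] at hP3
    have hkey : Real.exp (α*(w+Hfun a)) * (1 - α*w) ≤ J := by
      have hinv : α * (1/α) = 1 := by field_simp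
      have h1 : 1 - Real.exp (-α*(w+Hfun a))*J ≤ α*w := by
        have h2 := mul_le_mul_of_nonneg_left hP3 hαpos.le
        have h3 : α * ((1/α) * (1 - Real.exp (-α*(w+Hfun a))*J)) =
            1 - Real.exp (-α*(w+Hfun a))*J := by
          field_simp
        rw [h3] at h2
        exact h2
      have hE1 : Real.exp (α*(w+Hfun a)) * Real.exp (-α*(w+Hfun a)) = 1 := by
        rw [← Real.exp_add]; ring_nf; exact Real.exp_zero
      have h6 : Real.exp (α*(w+Hfun a)) * (Real.exp (-α*(w+Hfun a))*J) = J := by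
        rw [← mul_assoc, hE1, one_mul]
      nlinarith [mul_le_mul_of_nonneg_left h1 (Real.exp_pos (α*(w+Hfun a))).le, h6]
    -- upper bound on the moment generating function
    have hV2int : Integrable (fun ω => (Z ω - E)^2) μ := by
      refine integrable_of_bound _ (((hZmeas.sub measurable_const).pow_const 2).aestronglyMeasurable) (4*M^2) ?_
      filter_upwards with ω
      have h1 : |Z ω - E| ≤ 2*M := by
        have h := abs_sub (Z ω) E
        have := hZM ω; have := hEM; linarith
      rw [abs_of_nonneg (sq_nonneg _)]
      nlinarith [abs_le.mp h1]
    set V2 := ∫ ω, (Z ω - E)^2 ∂μ with hV2def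
    have hV2le : V2 ≤ 4*M^2 := by
      rw [hV2def]
      calc ∫ ω, (Z ω - E)^2 ∂μ ≤ ∫ _ω, 4*M^2 ∂μ := by
            apply integral_mono hV2int (integrable_const _)
            intro ω
            have h1 : |Z ω - E| ≤ 2*M := by
              have h := abs_sub (Z ω) E
              have := hZM ω; have := hEM; linarith
            show (Z ω - E)^2 ≤ 4*M^2
            nlinarith [abs_le.mp h1]
        _ = 4*M^2 := by rw [integral_const]; simp
    have hZE0 : ∫ ω, (Z ω - E) ∂μ = 0 := by
      rw [integral_sub hZint (integrable_const _), integral_const]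
      simp [hE]
    have hJle : J ≤ Real.exp (α*E) * (1 + 2*α^2*V2) := by
      have hpt : ∀ ω, Real.exp (α * Z ω) ≤
          Real.exp (α*E) * (1 + α*(Z ω - E) + (2*α^2)*(Z ω - E)^2) := by
        intro ω
        have hy : |α*(Z ω - E)| ≤ 1/2 := by
          rw [abs_mul, abs_of_pos hαpos]
          have h1 : |Z ω - E| ≤ 2*M := by
            have h := abs_sub (Z ω) E
            have := hZM ω; have := hEM; linarith
          calc α*|Z ω - E| ≤ (1/(4*M))*(2*M) := by
                apply mul_le_mul hαδ1 h1 (abs_nonneg _)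
                  (le_of_lt (div_pos one_pos (by linarith)))
            _ = 1/2 := by
                rw [div_mul_eq_mul_div, one_mul]
                rw [div_eq_iff (by linarith : (4:ℝ)*M ≠ 0)]
                ring
        have hq := exp_quad hy
        have he : Real.exp (α*Z ω) = Real.exp (α*E) * Real.exp (α*(Z ω - E)) := by
          rw [← Real.exp_add]; ring_nf
        rw [he]
        calc Real.exp (α*E) * Real.exp (α*(Z ω - E))
            ≤ Real.exp (α*E) * (1 + α*(Z ω - E) + 2*(α*(Z ω - E))^2) :=
              mul_le_mul_of_nonneg_left hq (Real.exp_pos _).le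
          _ = Real.exp (α*E) * (1 + α*(Z ω - E) + (2*α^2)*(Z ω - E)^2) := by ring
      have hint2 : Integrable (fun ω =>
          Real.exp (α*E) * (1 + α*(Z ω - E) + (2*α^2)*(Z ω - E)^2)) μ := by
        apply Integrable.const_mul
        exact ((integrable_const 1).add ((hZint.sub (integrable_const E)).const_mul α)).add
          (hV2int.const_mul _)
      have ia : Integrable (fun ω => α*(Z ω - E)) μ :=
        (hZint.sub (integrable_const E)).const_mul α
      have ib : Integrable (fun ω => (2*α^2)*(Z ω - E)^2) μ := hV2int.const_mul _
      have hf1 : Integrable (fun ω => 1 + α*(Z ω - E)) μ := (integrable_const 1).add ia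
      have e1 : ∫ ω, (1 + α*(Z ω - E) + (2*α^2)*(Z ω - E)^2) ∂μ
          = (∫ ω, (1 + α*(Z ω - E)) ∂μ) + ∫ ω, (2*α^2)*(Z ω - E)^2 ∂μ :=
        integral_add hf1 ib
      have e2 : ∫ ω, (1 + α*(Z ω - E)) ∂μ = 1 := by
        rw [integral_add (integrable_const 1) ia, integral_const, integral_const_mul, hZE0]
        simp
      have e3 : ∫ ω, (2*α^2)*(Z ω - E)^2 ∂μ = 2*α^2*V2 := by
        rw [integral_const_mul, ← hV2def]
      calc J ≤ ∫ ω, Real.exp (α*E) * (1 + α*(Z ω - E) + (2*α^2)*(Z ω - E)^2) ∂μ :=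
            integral_mono hexpZint hint2 hpt
        _ = Real.exp (α*E) * (1 + 2*α^2*V2) := by
            rw [integral_const_mul, e1, e2, e3]
    -- put things together
    have hαw : |α*w| ≤ 1/4 := by
      rw [abs_mul, abs_of_pos hαpos]
      calc α*|w| ≤ (1/(4*M))*M := mul_le_mul hαδ1 hwM (abs_nonneg _)
            (le_of_lt (div_pos one_pos hM4))
        _ = 1/4 := by
            rw [div_mul_eq_mul_div, one_mul,
              div_eq_div_iff (ne_of_gt hM4) (by norm_num : (4:ℝ) ≠ 0)]
            ring
    have hlow1 : Real.exp (α*(w+Hfun a)) * Real.exp (-(α*w + 2*(α*w)^2)) ≤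
        Real.exp (α*(w+Hfun a)) * (1 - α*w) :=
      mul_le_mul_of_nonneg_left (exp_quad' hαw) (Real.exp_pos _).le
    have hup1 : Real.exp (α*E) * (1 + 2*α^2*V2) ≤ Real.exp (α*E) * Real.exp (2*α^2*V2) := by
      apply mul_le_mul_of_nonneg_left _ (Real.exp_pos _).le
      have := Real.add_one_le_exp (2*α^2*V2)
      linarith
    have hfinal : Real.exp (α*(w+Hfun a) - (α*w + 2*(α*w)^2)) ≤
        Real.exp (α*E + 2*α^2*V2) := by
      have hl : Real.exp (α*(w+Hfun a) - (α*w + 2*(α*w)^2)) =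
          Real.exp (α*(w+Hfun a)) * Real.exp (-(α*w + 2*(α*w)^2)) := by
        rw [← Real.exp_add]; ring_nf
      have hr : Real.exp (α*E + 2*α^2*V2) = Real.exp (α*E) * Real.exp (2*α^2*V2) := by
        rw [← Real.exp_add]
      rw [hl, hr]
      exact le_trans hlow1 (le_trans hkey (le_trans hJle hup1))
    have hexp := Real.exp_le_exp.mp hfinal
    -- α H ≤ α E + 2α²w² + 2α²V2  ⇒  H ≤ E + 10 α M²
    have hHle : Hfun a ≤ E + 10*α*M^2 := by
      have h1 : α*(Hfun a) ≤ α*E + 2*(α*w)^2 + 2*α^2*V2 := by linarith [hexp]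
      have hwm := abs_le.mp hwM
      have hw2 : w^2 ≤ M^2 := sq_le_sq' hwm.1 hwm.2
      have h2 : 2*(α*w)^2 ≤ 2*α^2*M^2 := by
        have h2' := mul_le_mul_of_nonneg_left hw2 (by positivity : (0:ℝ) ≤ 2*α^2)
        calc 2*(α*w)^2 = 2*α^2*w^2 := by ring
          _ ≤ 2*α^2*M^2 := h2'
      have h3 : 2*α^2*V2 ≤ 8*α^2*M^2 := by
        have h3' := mul_le_mul_of_nonneg_left hV2le (by positivity : (0:ℝ) ≤ 2*α^2)
        calc 2*α^2*V2 ≤ 2*α^2*(4*M^2) := h3'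
          _ = 8*α^2*M^2 := by ring
      have h5 : α*(Hfun a) ≤ α*(E + 10*α*M^2) := by linarith
      exact le_of_mul_le_mul_left h5 hαpos
    have hlt : 10*α*M^2 < ε := by
      have hthis := mul_lt_mul_of_pos_right hαδ2 hM2
      calc 10*α*M^2 = α*(10*M^2) := by ring
        _ < (ε/(10*M^2))*(10*M^2) := hthis
        _ = ε := div_mul_cancel₀ ε (ne_of_gt hM2)
    rw [abs_of_nonneg (by linarith : (0:ℝ) ≤ Hfun a - E)]
    linarith
  · -- part (c): large risk aversion
    intro ε hε
    refine ⟨(T:ℝ) * (1 - Real.log ρ) / ε, ?_⟩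
    intro a ha hbig
    obtain ⟨⟨hP1, hP2⟩, _, hP4⟩ := master a ha
    set S := ∑ k ∈ I, 1 / a k with hSdef
    have hSpos : 0 < S := Finset.sum_pos (fun t ht => by have := ha t ht; positivity) hIne
    set K := (T:ℝ) * (1 - Real.log ρ) / ε with hKdef
    have hρpos : 0 < ρ := hApos
    have hlogρ : Real.log ρ ≤ 0 := Real.log_nonpos ENNReal.toReal_nonneg hρ1
    have hT0 : (0:ℝ) < (T:ℝ) := by exact_mod_cast hT
    have hKpos : 0 < K := by
      rw [hKdef]
      apply div_pos (mul_pos hT0 (by linarith)) hε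
    have hSK : S ≤ (T:ℝ) / K := by
      rw [hSdef]
      calc ∑ k ∈ I, 1 / a k ≤ ∑ _k ∈ I, 1 / K := by
            apply Finset.sum_le_sum
            intro t ht
            exact one_div_le_one_div_of_le hKpos (hbig t ht).le
        _ = (T:ℝ) / K := by
            rw [Finset.sum_const, hIdef, Nat.card_Icc]
            simp [div_eq_mul_inv, mul_comm]
    by_contra hcon
    push_neg at hcon
    have hcon' : ε ≤ Hinf - Hfun a := by
      have habs : |Hfun a - Hinf| = Hinf - Hfun a := by
        rw [abs_of_nonpos (by linarith), neg_sub]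
      rw [habs] at hcon
      exact hcon
    have hmono : Vfun S (w + Hfun a - Hinf) ≤ Vfun S (w - ε) :=
      (Vfun_le_iff hSpos).mpr (by linarith)
    have hch : Vfun S w ≤ (1-ρ)*S + ρ*Vfun S (w-ε) :=
      le_trans hP4 (add_le_add_right (mul_le_mul_of_nonneg_left hmono hρpos.le) _)
    have h2 : ρ * Real.exp (-((w-ε)/S)) ≤ Real.exp (-(w/S)) := by
      unfold Vfun at hch
      have hcancel := mul_pos hρpos hSpos
      nlinarith [hch, hSpos]
    have h3 : ρ * Real.exp (ε/S) ≤ 1 := by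
      have he : Real.exp (-((w-ε)/S)) = Real.exp (-(w/S)) * Real.exp (ε/S) := by
        rw [← Real.exp_add]
        congr 1
        field_simp
        ring
      rw [he] at h2
      have hpos := Real.exp_pos (-(w/S))
      nlinarith [Real.exp_pos (ε/S)]
    have h4 : Real.log ρ + ε/S ≤ 0 := by
      have he : Real.exp (Real.log ρ + ε/S) = ρ * Real.exp (ε/S) := by
        rw [Real.exp_add, Real.exp_log hρpos]
      have h5 : Real.exp (Real.log ρ + ε/S) ≤ Real.exp 0 := by
        rw [he, Real.exp_zero]; exact h3
      linarith [Real.exp_le_exp.mp h5]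
    have hεS : 1 - Real.log ρ ≤ ε/S := by
      have hTK : 0 < (T:ℝ)/K := div_pos hT0 hKpos
      have h6 : ε / ((T:ℝ)/K) ≤ ε / S := div_le_div_of_nonneg_left hε.le hSpos hSK
      have h7 : ε / ((T:ℝ)/K) = 1 - Real.log ρ := by
        rw [hKdef]
        field_simp
      linarith
    linarith
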